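/- Let V be a d×d real positive definite matrix, n a natural number, and for each t ∈ [n] let X_t be a d×m_t real matrix. Define V_0 = V and V_t = V_{t-1} + X_t X_tᵀ. Then det(V_n) ≥ det(V) · ∏_{t=1}^n (1 + tr(X_tᵀ V_{t-1}⁻¹ X_t)). -/

import Mathlib

open Matrix Finset

lemma aux_one_add_sum_le_prod {ι : Type*} (s : Finset ι) (f : ι → ℝ)
    (h : ∀ i ∈ s, 0 ≤ f i) : 1 + ∑ i ∈ s, f i ≤ ∏ i ∈ s, (1 + f i) := by
  induction s using Finset.cons_induction with
  | empty => simp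
  | cons a s ha ih =>
    rw [Finset.sum_cons, Finset.prod_cons]
    have h0 : 0 ≤ f a := h a (Finset.mem_cons_self a s)
    have hs : ∀ i ∈ s, 0 ≤ f i := fun i hi => h i (Finset.mem_cons_of_mem hi)
    have hsum : 0 ≤ ∑ i ∈ s, f i := Finset.sum_nonneg hs
    calc 1 + (f a + ∑ i ∈ s, f i)
        ≤ (1 + f a) * (1 + ∑ i ∈ s, f i) := by nlinarith
      _ ≤ (1 + f a) * ∏ i ∈ s, (1 + f i) := by
          apply mul_le_mul_of_nonneg_left (ih hs) (by linarith)

lemma aux_det_one_add {k : ℕ} (B : Matrix (Fin k) (Fin k) ℝ) (hB : B.PosSemidef) :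
    1 + B.trace ≤ (1 + B).det := by
  have hH := hB.isHermitian
  set U : Matrix (Fin k) (Fin k) ℝ := (hH.eigenvectorUnitary : Matrix (Fin k) (Fin k) ℝ)
  have hUU : U * star U = 1 := (Matrix.mem_unitaryGroup_iff).mp hH.eigenvectorUnitary.2
  have hspec : B = U * diagonal (RCLike.ofReal ∘ hH.eigenvalues) * star U :=
    hH.spectral_theorem
  have hdiag : (RCLike.ofReal ∘ hH.eigenvalues : Fin k → ℝ) = hH.eigenvalues := by
    funext i; simp [RCLike.ofReal]
  rw [hdiag] at hspec
  have h1B : (1 : Matrix (Fin k) (Fin k) ℝ) + B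
      = U * diagonal (fun i => 1 + hH.eigenvalues i) * star U := by
    have : (diagonal (fun i => 1 + hH.eigenvalues i) : Matrix (Fin k) (Fin k) ℝ)
        = 1 + diagonal hH.eigenvalues := by
      rw [← diagonal_one, ← diagonal_add]
    rw [this, Matrix.mul_add, Matrix.add_mul, Matrix.mul_one, hUU, ← hspec]
  have hdet : (1 + B).det = ∏ i, (1 + hH.eigenvalues i) := by
    rw [h1B, det_mul, det_mul, mul_right_comm, ← det_mul, hUU, det_one, one_mul, det_diagonal]
  have htr : B.trace = ∑ i, hH.eigenvalues i := by
    conv_lhs => rw [hspec]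
    rw [Matrix.trace_mul_cycle]
    have : star U * U = 1 := (Matrix.mem_unitaryGroup_iff').mp hH.eigenvectorUnitary.2
    rw [this, Matrix.one_mul, trace_diagonal]
  rw [hdet, htr]
  exact aux_one_add_sum_le_prod Finset.univ _ (fun i _ => hB.eigenvalues_nonneg i)

theorem stmt0 (d n : ℕ) (V : Matrix (Fin d) (Fin d) ℝ) (hV : V.PosDef)
    (m : ℕ → ℕ) (X : (t : ℕ) → Matrix (Fin d) (Fin (m t)) ℝ)
    (W : ℕ → Matrix (Fin d) (Fin d) ℝ)
    (hW0 : W 0 = V)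
    (hW : ∀ t, W (t + 1) = W t + X t * (X t)ᵀ) :
    (W n).det ≥ V.det * ∏ t ∈ Finset.range n, (1 + ((X t)ᵀ * (W t)⁻¹ * X t).trace) := by
  -- each W t is positive definite
  have hTX : ∀ (a b : ℕ) (Y : Matrix (Fin a) (Fin b) ℝ), Yᵀ = Yᴴ := fun a b Y =>
    (Matrix.conjTranspose_eq_transpose_of_trivial Y).symm
  have hWpd : ∀ t, (W t).PosDef := by
    intro t
    induction t with
    | zero => rwa [hW0]
    | succ t ih =>
      rw [hW t, hTX]
      exact ih.add_posSemidef (Matrix.posSemidef_self_mul_conjTranspose _)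
  -- key step
  have hB : ∀ t, ((X t)ᵀ * (W t)⁻¹ * X t).PosSemidef := by
    intro t
    rw [hTX]
    exact ((hWpd t).inv).posSemidef.conjTranspose_mul_mul_same (X t)
  have hstep : ∀ t, (W (t + 1)).det
      ≥ (W t).det * (1 + ((X t)ᵀ * (W t)⁻¹ * X t).trace) := by
    intro t
    have hinv : W t * (W t)⁻¹ = 1 :=
      Matrix.mul_nonsing_inv _ ((hWpd t).det_pos.ne').isUnit
    have hfact : W (t + 1) = W t * (1 + (W t)⁻¹ * X t * (X t)ᵀ) := by
      rw [hW t, Matrix.mul_add, Matrix.mul_one, ← Matrix.mul_assoc, ← Matrix.mul_assoc,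
        hinv, Matrix.one_mul]
    have hdet : (W (t + 1)).det
        = (W t).det * (1 + (X t)ᵀ * (W t)⁻¹ * X t).det := by
      rw [hfact, det_mul, det_one_add_mul_comm, ← Matrix.mul_assoc]
    rw [hdet]
    exact mul_le_mul_of_nonneg_left (aux_det_one_add _ (hB t)) (le_of_lt (hWpd t).det_pos)
  -- induction
  induction n with
  | zero => simp [hW0]
  | succ n ih =>
    rw [ge_iff_le, Finset.prod_range_succ, ← mul_assoc]
    have h1 : 0 ≤ 1 + ((X n)ᵀ * (W n)⁻¹ * X n).trace := by
      have htr : 0 ≤ ((X n)ᵀ * (W n)⁻¹ * X n).trace := by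
        rw [Matrix.trace]
        refine Finset.sum_nonneg fun i _ => ?_
        exact (hB n).diag_nonneg
      linarith
    calc (V.det * ∏ t ∈ Finset.range n, (1 + ((X t)ᵀ * (W t)⁻¹ * X t).trace))
          * (1 + ((X n)ᵀ * (W n)⁻¹ * X n).trace)
        ≤ (W n).det * (1 + ((X n)ᵀ * (W n)⁻¹ * X n).trace) :=
          mul_le_mul_of_nonneg_right ih h1
      _ ≤ (W (n + 1)).det := hstep n
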